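/- arXiv:nlin/0406017 — 4 statements merged into one kernel-verified Lean document; each statement's English description precedes it below -/
import Mathlib

section
/- The Steklov Hamiltonian H_S and the Lyapunov Hamiltonian H_L Poisson commute with respect to the e(3) Lie–Poisson bracket: {H_S, H_L}₁ = 0. -/
open scoped BigOperators

abbrev V3 := Fin 3 → ℝ
abbrev Ph := V3 × V3

noncomputable def eps (i j k : Fin 3) : ℝ :=
  (((j : ℤ) - (i : ℤ)) * ((k : ℤ) - (j : ℤ)) * ((k : ℤ) - (i : ℤ)) : ℤ) / 2

def dot (u v : V3) : ℝ := ∑ i, u i * v i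

def cross (u v : V3) : V3 :=
  ![u 1 * v 2 - u 2 * v 1, u 2 * v 0 - u 0 * v 2, u 0 * v 1 - u 1 * v 0]

/-- derivative in the direction of the i-th coordinate of the first factor -/
noncomputable def Dp (i : Fin 3) (F : Ph → ℝ) (z : Ph) : ℝ :=
  fderiv ℝ F z (Pi.single i 1, 0)

/-- derivative in the direction of the i-th coordinate of the second factor -/
noncomputable def DM (i : Fin 3) (F : Ph → ℝ) (z : Ph) : ℝ :=
  fderiv ℝ F z (0, Pi.single i 1)

/-- e(3) Lie–Poisson bracket on functions of z = (p, M):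
{M_i,M_j} = ε_{ijk} M_k, {M_i,p_j} = ε_{ijk} p_k, {p_i,p_j} = 0. -/
noncomputable def pb1 (F G : Ph → ℝ) (z : Ph) : ℝ :=
  ∑ i, ∑ j, ∑ k, eps i j k *
    ( z.2 k * DM i F z * DM j G z
    + z.1 k * (DM i F z * Dp j G z + Dp i F z * DM j G z) )
/-- Steklov Hamiltonian: 4H_S = ⟨M,AM⟩ + 2⟨M,A^∨p⟩ + ⟨Ap,C²p⟩,
with A = diag(a₁,a₂,a₃), A^∨ = diag(a₂a₃,a₃a₁,a₁a₂), C = diag(a₂−a₃,a₃−a₁,a₁−a₂). -/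
noncomputable def HS (a : Fin 3 → ℝ) (z : Ph) : ℝ :=
  ( dot z.2 (fun i => a i * z.2 i)
  + 2 * dot z.2 (fun i => (a (i+1) * a (i+2)) * z.1 i)
  + dot (fun i => a i * z.1 i) (fun i => (a (i+1) - a (i+2))^2 * z.1 i) ) / 4

/-- Lyapunov Hamiltonian: 4H_L = ⟨M,M⟩ − 2⟨M,Ap⟩ + ⟨p,C²p⟩. -/
noncomputable def HL (a : Fin 3 → ℝ) (z : Ph) : ℝ :=
  ( dot z.2 z.2 - 2 * dot z.2 (fun i => a i * z.1 i)
  + dot z.1 (fun i => (a (i+1) - a (i+2))^2 * z.1 i) ) / 4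


noncomputable def L1 (i : Fin 3) : Ph →L[ℝ] ℝ :=
  (ContinuousLinearMap.proj i).comp (ContinuousLinearMap.fst ℝ V3 V3)

noncomputable def L2 (i : Fin 3) : Ph →L[ℝ] ℝ :=
  (ContinuousLinearMap.proj i).comp (ContinuousLinearMap.snd ℝ V3 V3)

lemma hL1 (i : Fin 3) (z : Ph) : HasFDerivAt (fun z : Ph => z.1 i) (L1 i) z :=
  (L1 i).hasFDerivAt

lemma hL2 (i : Fin 3) (z : Ph) : HasFDerivAt (fun z : Ph => z.2 i) (L2 i) z :=
  (L2 i).hasFDerivAt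

lemma fin01 : (0:Fin 3)+1 = 1 := rfl
lemma fin02 : (0:Fin 3)+2 = 2 := rfl
lemma fin11 : (1:Fin 3)+1 = 2 := rfl
lemma fin12 : (1:Fin 3)+2 = 0 := rfl
lemma fin21 : (2:Fin 3)+1 = 0 := rfl
lemma fin22 : (2:Fin 3)+2 = 1 := rfl

lemma hfL (a : Fin 3 → ℝ) : HL a = fun w : Ph =>
    ( w.2 0 * w.2 0 + w.2 1 * w.2 1 + w.2 2 * w.2 2
    - 2 * (w.2 0 * (a 0 * w.1 0) + w.2 1 * (a 1 * w.1 1) + w.2 2 * (a 2 * w.1 2))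
    + (w.1 0 * ((a 1 - a 2)^2 * w.1 0) + w.1 1 * ((a 2 - a 0)^2 * w.1 1)
      + w.1 2 * ((a 0 - a 1)^2 * w.1 2))) * (4:ℝ)⁻¹ := by
  funext w
  simp only [HL, dot, Fin.sum_univ_three, fin01, fin02, fin11, fin12, fin21, fin22,
    div_eq_mul_inv]

lemma hfS (a : Fin 3 → ℝ) : HS a = fun w : Ph =>
    ( w.2 0 * (a 0 * w.2 0) + w.2 1 * (a 1 * w.2 1) + w.2 2 * (a 2 * w.2 2)
    + 2 * (w.2 0 * (a 1 * a 2 * w.1 0) + w.2 1 * (a 2 * a 0 * w.1 1)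
        + w.2 2 * (a 0 * a 1 * w.1 2))
    + (a 0 * w.1 0 * ((a 1 - a 2)^2 * w.1 0) + a 1 * w.1 1 * ((a 2 - a 0)^2 * w.1 1)
      + a 2 * w.1 2 * ((a 0 - a 1)^2 * w.1 2))) * (4:ℝ)⁻¹ := by
  funext w
  simp only [HS, dot, Fin.sum_univ_three, fin01, fin02, fin11, fin12, fin21, fin22,
    div_eq_mul_inv]

section derivs
variable (a : Fin 3 → ℝ) (z : Ph)

lemma DM_HL (i : Fin 3) :
    DM i (HL a) z = (2 * z.2 i - 2 * (a i * z.1 i)) / 4 := by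
  have t1 := ((hL2 0 z).mul (hL2 0 z)).add ((hL2 1 z).mul (hL2 1 z))
  have t2 := t1.add ((hL2 2 z).mul (hL2 2 z))
  have t3 := ((hL2 0 z).mul ((hL1 0 z).const_mul (a 0))).add
      ((hL2 1 z).mul ((hL1 1 z).const_mul (a 1)))
  have t4 := (t3.add ((hL2 2 z).mul ((hL1 2 z).const_mul (a 2)))).const_mul (2:ℝ)
  have t5 := ((hL1 0 z).mul ((hL1 0 z).const_mul ((a 1 - a 2)^2))).add
      ((hL1 1 z).mul ((hL1 1 z).const_mul ((a 2 - a 0)^2)))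
  have t6 := t5.add ((hL1 2 z).mul ((hL1 2 z).const_mul ((a 0 - a 1)^2)))
  have h := ((t2.sub t4).add t6).mul_const ((4:ℝ)⁻¹)
  simp only [Pi.mul_def, Pi.add_def, Pi.sub_def] at h
  rw [DM, hfL, h.fderiv]
  fin_cases i <;> (simp [L1, L2, Pi.single_apply]; ring)

lemma Dp_HL (i : Fin 3) :
    Dp i (HL a) z = (-2 * (a i * z.2 i) + 2 * ((a (i+1) - a (i+2))^2 * z.1 i)) / 4 := by
  have t1 := ((hL2 0 z).mul (hL2 0 z)).add ((hL2 1 z).mul (hL2 1 z))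
  have t2 := t1.add ((hL2 2 z).mul (hL2 2 z))
  have t3 := ((hL2 0 z).mul ((hL1 0 z).const_mul (a 0))).add
      ((hL2 1 z).mul ((hL1 1 z).const_mul (a 1)))
  have t4 := (t3.add ((hL2 2 z).mul ((hL1 2 z).const_mul (a 2)))).const_mul (2:ℝ)
  have t5 := ((hL1 0 z).mul ((hL1 0 z).const_mul ((a 1 - a 2)^2))).add
      ((hL1 1 z).mul ((hL1 1 z).const_mul ((a 2 - a 0)^2)))
  have t6 := t5.add ((hL1 2 z).mul ((hL1 2 z).const_mul ((a 0 - a 1)^2)))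
  have h := ((t2.sub t4).add t6).mul_const ((4:ℝ)⁻¹)
  simp only [Pi.mul_def, Pi.add_def, Pi.sub_def] at h
  rw [Dp, hfL, h.fderiv]
  fin_cases i <;>
    (simp [L1, L2, Pi.single_apply, fin01, fin02, fin11, fin12, fin21, fin22]; ring)

lemma DM_HS (i : Fin 3) :
    DM i (HS a) z = (2 * (a i * z.2 i) + 2 * (a (i+1) * a (i+2) * z.1 i)) / 4 := by
  have t1 := ((hL2 0 z).mul ((hL2 0 z).const_mul (a 0))).add
      ((hL2 1 z).mul ((hL2 1 z).const_mul (a 1)))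
  have t2 := t1.add ((hL2 2 z).mul ((hL2 2 z).const_mul (a 2)))
  have t3 := ((hL2 0 z).mul ((hL1 0 z).const_mul (a 1 * a 2))).add
      ((hL2 1 z).mul ((hL1 1 z).const_mul (a 2 * a 0)))
  have t4 := (t3.add ((hL2 2 z).mul ((hL1 2 z).const_mul (a 0 * a 1)))).const_mul (2:ℝ)
  have t5 := (((hL1 0 z).const_mul (a 0)).mul ((hL1 0 z).const_mul ((a 1 - a 2)^2))).add
      (((hL1 1 z).const_mul (a 1)).mul ((hL1 1 z).const_mul ((a 2 - a 0)^2)))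
  have t6 := t5.add (((hL1 2 z).const_mul (a 2)).mul ((hL1 2 z).const_mul ((a 0 - a 1)^2)))
  have h := ((t2.add t4).add t6).mul_const ((4:ℝ)⁻¹)
  simp only [Pi.mul_def, Pi.add_def, Pi.sub_def] at h
  rw [DM, hfS, h.fderiv]
  fin_cases i <;>
    (simp [L1, L2, Pi.single_apply, fin01, fin02, fin11, fin12, fin21, fin22]; ring)

lemma Dp_HS (i : Fin 3) :
    Dp i (HS a) z = (2 * (a (i+1) * a (i+2) * z.2 i)
      + 2 * (a i * (a (i+1) - a (i+2))^2 * z.1 i)) / 4 := by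
  have t1 := ((hL2 0 z).mul ((hL2 0 z).const_mul (a 0))).add
      ((hL2 1 z).mul ((hL2 1 z).const_mul (a 1)))
  have t2 := t1.add ((hL2 2 z).mul ((hL2 2 z).const_mul (a 2)))
  have t3 := ((hL2 0 z).mul ((hL1 0 z).const_mul (a 1 * a 2))).add
      ((hL2 1 z).mul ((hL1 1 z).const_mul (a 2 * a 0)))
  have t4 := (t3.add ((hL2 2 z).mul ((hL1 2 z).const_mul (a 0 * a 1)))).const_mul (2:ℝ)
  have t5 := (((hL1 0 z).const_mul (a 0)).mul ((hL1 0 z).const_mul ((a 1 - a 2)^2))).add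
      (((hL1 1 z).const_mul (a 1)).mul ((hL1 1 z).const_mul ((a 2 - a 0)^2)))
  have t6 := t5.add (((hL1 2 z).const_mul (a 2)).mul ((hL1 2 z).const_mul ((a 0 - a 1)^2)))
  have h := ((t2.add t4).add t6).mul_const ((4:ℝ)⁻¹)
  simp only [Pi.mul_def, Pi.add_def, Pi.sub_def] at h
  rw [Dp, hfS, h.fderiv]
  fin_cases i <;>
    (simp [L1, L2, Pi.single_apply, fin01, fin02, fin11, fin12, fin21, fin22]; ring)

end derivs

/-- The Steklov and Lyapunov Hamiltonians are in involution on e(3). -/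
theorem steklov_lyapunov_involution (a : Fin 3 → ℝ) (z : Ph) :
    pb1 (HS a) (HL a) z = 0 := by
  simp only [pb1, Fin.sum_univ_three, DM_HS, Dp_HS, DM_HL, Dp_HL,
    fin01, fin02, fin11, fin12, fin21, fin22]
  norm_num [eps]
  ring
end

section
/- With ℓ(λ) = W(½(M − Bp) + λp), where W = diag(√(λ−a₁), √(λ−a₂), √(λ−a₃)) and B = diag(a₂+a₃, a₃+a₁, a₁+a₂), the squared length |ℓ(λ)|² is the cubic polynomial 𝒜λ³ + (ℬ − 𝒜(a₁+a₂+a₃))λ² + H₁λ + H₂ in λ, where 𝒜 = |p|², ℬ = ⟨p,M⟩, H₁ = H_L − (ℬ/2)tr A + 𝒜 tr A^∨ and H₂ = −H_S + (ℬ/2)tr A^∨ − 𝒜 det A. -/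
open scoped BigOperators

/-- |ℓ(λ)|² = Σᵢ (λ−aᵢ)(½(Mᵢ−Bᵢᵢpᵢ)+λpᵢ)² is the cubic polynomial
𝒜λ³ + (ℬ − 𝒜 tr A)λ² + H₁λ + H₂, where 𝒜 = |p|², ℬ = ⟨p,M⟩,
H₁ = H_L − (ℬ/2)tr A + 𝒜 tr A^∨, H₂ = −H_S + (ℬ/2)tr A^∨ − 𝒜 det A,
and B = diag(a₂+a₃, a₃+a₁, a₁+a₂). -/
theorem kotter_vector_norm (a : Fin 3 → ℝ) (z : Ph) (lam : ℝ) :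
    (∑ i, (lam - a i) * ((1/2) * (z.2 i - (a (i+1) + a (i+2)) * z.1 i) + lam * z.1 i)^2)
    = dot z.1 z.1 * lam^3
      + (dot z.1 z.2 - dot z.1 z.1 * (a 0 + a 1 + a 2)) * lam^2
      + (HL a z - (dot z.1 z.2 / 2) * (a 0 + a 1 + a 2)
          + dot z.1 z.1 * (a 1 * a 2 + a 2 * a 0 + a 0 * a 1)) * lam
      + (- HS a z + (dot z.1 z.2 / 2) * (a 1 * a 2 + a 2 * a 0 + a 0 * a 1)
          - dot z.1 z.1 * (a 0 * a 1 * a 2)) := by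
  set_option maxHeartbeats 1000000 in
  simp only [HS, HL, dot, Fin.sum_univ_three, Fin.reduceAdd, Fin.isValue]
  ring
end

section
/- The Steklov integrals on so(4), Ĥ₁ = 2⟨√(A^∨) s, t⟩ − ⟨s, A s⟩ and Ĥ₂ = ⟨t, A^∨ t⟩ − 2⟨√(A^∨) s, A t⟩, are in involution with respect to the so(4) Lie–Poisson bracket: {Ĥ₁, Ĥ₂}*₁ = 0. -/
open scoped BigOperators

/-- so(4) Lie–Poisson bracket on functions of z = (s, t):
{s_i,s_j} = ε_{ijk}s_k, {s_i,t_j} = 0, {t_i,t_j} = ε_{ijk}t_k. -/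
noncomputable def pbO (F G : Ph → ℝ) (z : Ph) : ℝ :=
  ∑ i, ∑ j, ∑ k, eps i j k *
    ( z.1 k * Dp i F z * Dp j G z + z.2 k * DM i F z * DM j G z )

noncomputable def Xc (i : Fin 3) : Ph →L[ℝ] ℝ :=
  (ContinuousLinearMap.proj i).comp (ContinuousLinearMap.fst ℝ V3 V3)
noncomputable def Yc (i : Fin 3) : Ph →L[ℝ] ℝ :=
  (ContinuousLinearMap.proj i).comp (ContinuousLinearMap.snd ℝ V3 V3)

lemma hXc (i : Fin 3) (z : Ph) : HasFDerivAt (fun z : Ph => z.1 i) (Xc i) z :=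
  (Xc i).hasFDerivAt
lemma hYc (i : Fin 3) (z : Ph) : HasFDerivAt (fun z : Ph => z.2 i) (Yc i) z :=
  (Yc i).hasFDerivAt

lemma DpH1 (a d : Fin 3 → ℝ) (j : Fin 3) (z : Ph) :
    Dp j (fun z : Ph => 2 * ∑ i, d i * z.1 i * z.2 i - ∑ i, a i * z.1 i ^ 2) z
      = 2 * d j * z.2 j - 2 * a j * z.1 j := by
  have hG := ((HasFDerivAt.fun_sum (fun (i : Fin 3) (_ : i ∈ Finset.univ) =>
        ((hXc i z).const_mul (d i)).mul (hYc i z))).const_mul 2).sub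
      (HasFDerivAt.fun_sum (fun (i : Fin 3) (_ : i ∈ Finset.univ) =>
        ((hXc i z).mul (hXc i z)).const_mul (a i)))
  have hF : HasFDerivAt
      (fun z : Ph => 2 * ∑ i, d i * z.1 i * z.2 i - ∑ i, a i * z.1 i ^ 2) _ z :=
    hG.congr_of_eventuallyEq (Filter.Eventually.of_forall fun w => by simp only [pow_two, Pi.mul_apply, Pi.sub_apply, Finset.sum_apply])
  rw [Dp, hF.fderiv]
  fin_cases j <;>
    simp [Xc, Yc, Fin.sum_univ_three, Pi.single_apply] <;> ring

lemma DMH1 (a d : Fin 3 → ℝ) (j : Fin 3) (z : Ph) :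
    DM j (fun z : Ph => 2 * ∑ i, d i * z.1 i * z.2 i - ∑ i, a i * z.1 i ^ 2) z
      = 2 * d j * z.1 j := by
  have hG := ((HasFDerivAt.fun_sum (fun (i : Fin 3) (_ : i ∈ Finset.univ) =>
        ((hXc i z).const_mul (d i)).mul (hYc i z))).const_mul 2).sub
      (HasFDerivAt.fun_sum (fun (i : Fin 3) (_ : i ∈ Finset.univ) =>
        ((hXc i z).mul (hXc i z)).const_mul (a i)))
  have hF : HasFDerivAt
      (fun z : Ph => 2 * ∑ i, d i * z.1 i * z.2 i - ∑ i, a i * z.1 i ^ 2) _ z :=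
    hG.congr_of_eventuallyEq (Filter.Eventually.of_forall fun w => by simp only [pow_two, Pi.mul_apply, Pi.sub_apply, Finset.sum_apply])
  rw [DM, hF.fderiv]
  fin_cases j <;>
    simp [Xc, Yc, Fin.sum_univ_three, Pi.single_apply] <;> ring

lemma DpH2 (a d : Fin 3 → ℝ) (j : Fin 3) (z : Ph) :
    Dp j (fun z : Ph => (∑ i, (a (i+1) * a (i+2)) * z.2 i ^ 2)
        - 2 * ∑ i, d i * z.1 i * (a i * z.2 i)) z
      = -(2 * d j * a j * z.2 j) := by
  have hG := (HasFDerivAt.fun_sum (fun (i : Fin 3) (_ : i ∈ Finset.univ) =>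
        ((hYc i z).mul (hYc i z)).const_mul (a (i+1) * a (i+2)))).sub
      ((HasFDerivAt.fun_sum (fun (i : Fin 3) (_ : i ∈ Finset.univ) =>
        ((hXc i z).const_mul (d i)).mul ((hYc i z).const_mul (a i)))).const_mul 2)
  have hF : HasFDerivAt
      (fun z : Ph => (∑ i, (a (i+1) * a (i+2)) * z.2 i ^ 2)
        - 2 * ∑ i, d i * z.1 i * (a i * z.2 i)) _ z :=
    hG.congr_of_eventuallyEq (Filter.Eventually.of_forall fun w => by simp only [pow_two, Pi.mul_apply, Pi.sub_apply, Finset.sum_apply])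
  rw [Dp, hF.fderiv]
  fin_cases j <;>
    simp [Xc, Yc, Fin.sum_univ_three, Pi.single_apply] <;> ring

lemma DMH2 (a d : Fin 3 → ℝ) (j : Fin 3) (z : Ph) :
    DM j (fun z : Ph => (∑ i, (a (i+1) * a (i+2)) * z.2 i ^ 2)
        - 2 * ∑ i, d i * z.1 i * (a i * z.2 i)) z
      = 2 * (a (j+1) * a (j+2)) * z.2 j - 2 * d j * a j * z.1 j := by
  have hG := (HasFDerivAt.fun_sum (fun (i : Fin 3) (_ : i ∈ Finset.univ) =>
        ((hYc i z).mul (hYc i z)).const_mul (a (i+1) * a (i+2)))).sub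
      ((HasFDerivAt.fun_sum (fun (i : Fin 3) (_ : i ∈ Finset.univ) =>
        ((hXc i z).const_mul (d i)).mul ((hYc i z).const_mul (a i)))).const_mul 2)
  have hF : HasFDerivAt
      (fun z : Ph => (∑ i, (a (i+1) * a (i+2)) * z.2 i ^ 2)
        - 2 * ∑ i, d i * z.1 i * (a i * z.2 i)) _ z :=
    hG.congr_of_eventuallyEq (Filter.Eventually.of_forall fun w => by simp only [pow_two, Pi.mul_apply, Pi.sub_apply, Finset.sum_apply])
  rw [DM, hF.fderiv]
  fin_cases j <;>
    simp [Xc, Yc, Fin.sum_univ_three, Pi.single_apply] <;> ring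

/-- The Steklov integrals on so(4),
Ĥ₁ = 2⟨√(A^∨)s, t⟩ − ⟨s,As⟩ and Ĥ₂ = ⟨t,A^∨t⟩ − 2⟨√(A^∨)s, At⟩,
are in involution; here d = diag entries of √(A^∨): dᵢ² = A^∨ᵢᵢ and
d₁d₂d₃ = a₁a₂a₃. -/
theorem steklov_so4_involution (a d : Fin 3 → ℝ)
    (hd : ∀ i, d i ^ 2 = a (i+1) * a (i+2))
    (hddd : d 0 * d 1 * d 2 = a 0 * a 1 * a 2) (z : Ph) :
    pbO (fun z => 2 * ∑ i, d i * z.1 i * z.2 i - ∑ i, a i * z.1 i ^ 2)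
        (fun z => (∑ i, (a (i+1) * a (i+2)) * z.2 i ^ 2)
                  - 2 * ∑ i, d i * z.1 i * (a i * z.2 i)) z = 0 := by
  have e0 : d 0 ^ 2 = a 1 * a 2 := hd 0
  have e1 : d 1 ^ 2 = a 2 * a 0 := hd 1
  have e2 : d 2 ^ 2 = a 0 * a 1 := hd 2
  have h0 : d 1 * d 2 = a 0 * d 0 := by
    rcases eq_or_ne (d 0) 0 with h | h
    · have ha : a 1 * a 2 = 0 := by rw [← e0, h]; ring
      have hz : (d 1 * d 2) ^ 2 = 0 := by
        rw [mul_pow, e1, e2]; linear_combination a 0 ^ 2 * ha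
      have hz' : d 1 * d 2 = 0 := by
        have := sq_eq_zero_iff.mp hz; exact this
      rw [hz', h]; ring
    · exact mul_left_cancel₀ h (by linear_combination hddd - a 0 * e0)
  have h1 : d 2 * d 0 = a 1 * d 1 := by
    rcases eq_or_ne (d 1) 0 with h | h
    · have ha : a 2 * a 0 = 0 := by rw [← e1, h]; ring
      have hz : (d 2 * d 0) ^ 2 = 0 := by
        rw [mul_pow, e2, e0]; linear_combination a 1 ^ 2 * ha
      have hz' : d 2 * d 0 = 0 := sq_eq_zero_iff.mp hz
      rw [hz', h]; ring
    · exact mul_left_cancel₀ h (by linear_combination hddd - a 1 * e1)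
  have h2 : d 0 * d 1 = a 2 * d 2 := by
    rcases eq_or_ne (d 2) 0 with h | h
    · have ha : a 0 * a 1 = 0 := by rw [← e2, h]; ring
      have hz : (d 0 * d 1) ^ 2 = 0 := by
        rw [mul_pow, e0, e1]; linear_combination a 2 ^ 2 * ha
      have hz' : d 0 * d 1 = 0 := sq_eq_zero_iff.mp hz
      rw [hz', h]; ring
    · exact mul_left_cancel₀ h (by linear_combination hddd - a 2 * e2)
  simp only [pbO, DpH1, DMH1, DpH2, DMH2]
  simp only [Fin.sum_univ_three]
  norm_num [eps]
  simp only [show (1 + 1 : Fin 3) = 2 from rfl, show (1 + 2 : Fin 3) = 0 from rfl,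
    show (2 + 1 : Fin 3) = 0 from rfl, show (2 + 2 : Fin 3) = 1 from rfl]
  linear_combination
    (4 * (a 1 - a 2) * (z.1 1 * z.1 2 * z.2 0 + z.1 0 * z.2 1 * z.2 2)) * h0 +
    (4 * (a 2 - a 0) * (z.1 1 * z.2 0 * z.2 2 + z.1 0 * z.1 2 * z.2 1)) * h1 +
    (4 * (a 0 - a 1) * (z.1 2 * z.2 0 * z.2 1 + z.1 0 * z.1 1 * z.2 2)) * h2
end

section
/- For canonical variables x_i, π_i with {π_i, x_j} = δ_{ij}, {x_i,x_j} = {π_i,π_j} = 0, and distinct constants a₁,a₂,a₃, the functions e(λ) = Σᵢ xᵢ²/(λ−aᵢ) and h(λ) = −½ Σᵢ xᵢπᵢ/(λ−aᵢ) satisfy the r-matrix relation {h(λ), e(μ)} = (e(λ) − e(μ))/(λ − μ) for all λ ≠ μ not equal to any aᵢ. -/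
open scoped BigOperators

/-- Canonical Poisson bracket on z = (x, π): {π_i,x_j} = δ_{ij}. -/
noncomputable def pbC (F G : Ph → ℝ) (z : Ph) : ℝ :=
  ∑ i, (DM i F z * Dp i G z - Dp i F z * DM i G z)


noncomputable def Pc (i : Fin 3) : Ph →L[ℝ] ℝ :=
  (ContinuousLinearMap.proj i).comp (ContinuousLinearMap.fst ℝ V3 V3)
noncomputable def Mc (i : Fin 3) : Ph →L[ℝ] ℝ :=
  (ContinuousLinearMap.proj i).comp (ContinuousLinearMap.snd ℝ V3 V3)

lemma hasP (i : Fin 3) (z : Ph) : HasFDerivAt (fun z : Ph => z.1 i) (Pc i) z :=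
  (Pc i).hasFDerivAt
lemma hasM (i : Fin 3) (z : Ph) : HasFDerivAt (fun z : Ph => z.2 i) (Mc i) z :=
  (Mc i).hasFDerivAt

lemma hasE (c : Fin 3 → ℝ) (z : Ph) :
    HasFDerivAt (fun z : Ph => ∑ i, z.1 i ^ 2 / c i)
      (∑ i : Fin 3, (c i)⁻¹ • (z.1 i • Pc i + z.1 i • Pc i)) z := by
  have : (fun z : Ph => ∑ i, z.1 i ^ 2 / c i)
      = fun z : Ph => ∑ i, (c i)⁻¹ * (z.1 i * z.1 i) := by
    funext z; apply Finset.sum_congr rfl; intro i _; rw [pow_two]; ring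
  rw [this]
  exact HasFDerivAt.fun_sum fun i _ => ((hasP i z).mul (hasP i z)).const_mul _

lemma hasH (c : Fin 3 → ℝ) (z : Ph) :
    HasFDerivAt (fun z : Ph => -(1/2) * ∑ i, z.1 i * z.2 i / c i)
      ((-(1/2) : ℝ) • ∑ i : Fin 3, (c i)⁻¹ • (z.1 i • Mc i + z.2 i • Pc i)) z := by
  have : (fun z : Ph => -(1/2) * ∑ i, z.1 i * z.2 i / c i)
      = fun z : Ph => -(1/2) * ∑ i, (c i)⁻¹ * (z.1 i * z.2 i) := by
    funext z; congr 1; apply Finset.sum_congr rfl; intro i _; ring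
  rw [this]
  exact (HasFDerivAt.fun_sum fun i _ => ((hasP i z).mul (hasM i z)).const_mul _).const_mul _

lemma Dp_e (c : Fin 3 → ℝ) (z : Ph) (j : Fin 3) :
    Dp j (fun z : Ph => ∑ i, z.1 i ^ 2 / c i) z = 2 * z.1 j / (c j) := by
  rw [Dp, (hasE c z).fderiv]
  simp [Pc, Mc, ContinuousLinearMap.sum_apply, Pi.single_apply, Finset.sum_ite_eq, Finset.sum_ite_eq',
    div_eq_mul_inv]
  rw [Finset.sum_add_distrib]
  simp [Finset.sum_ite_eq']
  ring

lemma DM_e (c : Fin 3 → ℝ) (z : Ph) (j : Fin 3) :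
    DM j (fun z : Ph => ∑ i, z.1 i ^ 2 / c i) z = 0 := by
  rw [DM, (hasE c z).fderiv]
  simp [Pc, Mc, ContinuousLinearMap.sum_apply]

lemma Dp_h (c : Fin 3 → ℝ) (z : Ph) (j : Fin 3) :
    Dp j (fun z : Ph => -(1/2) * ∑ i, z.1 i * z.2 i / c i) z
      = -(1/2) * (z.2 j / c j) := by
  rw [Dp, (hasH c z).fderiv]
  simp [Pc, Mc, ContinuousLinearMap.sum_apply, Pi.single_apply, Finset.sum_ite_eq, Finset.sum_ite_eq',
    div_eq_mul_inv]
  ring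

lemma DM_h (c : Fin 3 → ℝ) (z : Ph) (j : Fin 3) :
    DM j (fun z : Ph => -(1/2) * ∑ i, z.1 i * z.2 i / c i) z
      = -(1/2) * (z.1 j / c j) := by
  rw [DM, (hasH c z).fderiv]
  simp [Pc, Mc, ContinuousLinearMap.sum_apply, Pi.single_apply, Finset.sum_ite_eq, Finset.sum_ite_eq',
    div_eq_mul_inv]
  ring

/-- The r-matrix relation {h(λ), e(μ)} = (e(λ) − e(μ))/(λ − μ) for
e(λ) = Σᵢ xᵢ²/(λ−aᵢ), h(λ) = −½Σᵢ xᵢπᵢ/(λ−aᵢ). -/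
theorem rmatrix_relation (a : Fin 3 → ℝ) (hdist : ∀ i j, i ≠ j → a i ≠ a j)
    (lam mu : ℝ) (hlm : lam ≠ mu) (hl : ∀ i, lam ≠ a i) (hm : ∀ i, mu ≠ a i)
    (z : Ph) :
    pbC (fun z => -(1/2) * ∑ i, z.1 i * z.2 i / (lam - a i))
        (fun z => ∑ i, z.1 i ^ 2 / (mu - a i)) z
    = ((∑ i, z.1 i ^ 2 / (lam - a i)) - (∑ i, z.1 i ^ 2 / (mu - a i))) / (lam - mu) := by
  unfold pbC
  simp only [Dp_e, DM_e, Dp_h, DM_h, mul_zero, sub_zero]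
  rw [← Finset.sum_sub_distrib, Finset.sum_div]
  apply Finset.sum_congr rfl
  intro j _
  have h1 : lam - a j ≠ 0 := sub_ne_zero.mpr (hl j)
  have h2 : mu - a j ≠ 0 := sub_ne_zero.mpr (hm j)
  have h3 : lam - mu ≠ 0 := sub_ne_zero.mpr hlm
  field_simp
  ring
end
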